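/- For every nonnegative integer k, the reverse Bessel polynomials satisfy p_{k+1}(x) = x \sum_{l=0}^{k} \binom{k}{l} 2^l (l - 1/2)_l p_{k-l}(x), where (y)_l is the falling factorial. -/

import Mathlib

open Finset Nat

/-- The reverse Bessel polynomial `p n`. -/
noncomputable def pB (n : ℕ) (x : ℝ) : ℝ :=
  if n = 0 then 1 else
    ∑ k ∈ Finset.Icc 1 n,
      ((2 * n - k - 1).factorial : ℝ) / (2 ^ (n - k) * (k - 1).factorial * (n - k).factorial) * x ^ k

noncomputable def cf (n j : ℕ) : ℝ :=
  ((2 * n - j - 1).factorial : ℝ) / (2 ^ (n - j) * (j - 1).factorial * (n - j).factorial)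


lemma choose_two_mul_succ (m : ℕ) :
    (2*m+2).choose (m+1) = 2 * (2*m+1).choose m := by
  rw [show 2*m+2 = (2*m+1)+1 from rfl, Nat.choose_succ_succ, Nat.choose_symm_half]
  omega

lemma R_pascal (N t : ℕ) : ∑ i ∈ range (N+1), (t+1).choose i
    = ∑ i ∈ range (N+1), t.choose i + ∑ i ∈ range N, t.choose i := by
  rw [Finset.sum_range_succ' (fun i => (t+1).choose i) N,
      Finset.sum_range_succ' (fun i => t.choose i) N]
  simp only [Nat.choose_succ_succ, Nat.choose_zero_right]
  rw [Finset.sum_add_distrib]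
  ring

lemma E_eq (n : ℕ) : ∀ b : ℕ, ∑ l ∈ range (n+1), (2*l).choose l * ((2*(n-l)+b).choose (n-l))
    = ∑ i ∈ range (n+1), (2*n+b+1).choose i := by
  induction n with
  | zero => intro b; simp
  | succ n ih =>
    intro b
    induction b with
    | zero =>
      rw [Finset.sum_range_succ]
      have h1 : ∀ l ∈ range (n+1), (2*l).choose l * (2*(n+1-l)+0).choose (n+1-l)
          = 2 * ((2*l).choose l * (2*(n-l)+1).choose (n-l)) := by
        intro l hl
        have hln : l ≤ n := by simpa [Nat.lt_succ_iff] using hl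
        have e1 : n+1-l = (n-l)+1 := by omega
        have e2 : 2*(n+1-l)+0 = 2*(n-l)+2 := by omega
        rw [e2, e1, choose_two_mul_succ]
        ring
      rw [Finset.sum_congr rfl h1, ← Finset.mul_sum, ih 1]
      have e3 : 2*(n+1)+0+1 = (2*n+2)+1 := by ring
      rw [e3, R_pascal (n+1) (2*n+2)]
      rw [Finset.sum_range_succ (fun i => (2*n+2).choose i) (n+1)]
      have e4 : (2*(n+1-(n+1))+0).choose (n+1-(n+1)) = 1 := by simp
      rw [e4]
      have e5 : 2*n+1+1 = 2*n+2 := rfl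
      rw [e5]
      have e6 : 2*(n+1) = 2*n+2 := by ring
      rw [e6]
      ring
    | succ b ihb =>
      -- split both the goal sum and use Pascal
      have h1 : ∀ l ∈ range (n+1), (2*l).choose l * (2*(n+1-l)+(b+1)).choose (n+1-l)
          = (2*l).choose l * (2*(n+1-l)+b).choose (n+1-l)
            + (2*l).choose l * (2*(n-l)+(b+2)).choose (n-l) := by
        intro l hl
        have hln : l ≤ n := by simpa [Nat.lt_succ_iff] using hl
        have e1 : n+1-l = (n-l)+1 := by omega
        have e2 : 2*(n+1-l)+(b+1) = (2*(n-l)+(b+2)) + ((n-l)+1) - (n-l) := by omega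
        rw [e1]
        rw [show 2*((n-l)+1)+(b+1) = (2*(n-l)+(b+2))+1 from by ring]
        rw [Nat.choose_succ_succ' (2*(n-l)+(b+2)) (n-l), Nat.mul_add]
        rw [show 2*((n-l)+1)+b = 2*(n-l)+(b+2) from by ring]
        exact add_comm _ _
      rw [Finset.sum_range_succ, Finset.sum_congr rfl h1, Finset.sum_add_distrib]
      have hlast : (2*(n+1)).choose (n+1) * (2*(n+1-(n+1))+(b+1)).choose (n+1-(n+1))
          = (2*(n+1)).choose (n+1) * (2*(n+1-(n+1))+b).choose (n+1-(n+1)) := by simp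
      rw [hlast]
      rw [add_right_comm, ← Finset.sum_range_succ (fun l => (2*l).choose l * (2*(n+1-l)+b).choose (n+1-l)) (n+1)]
      rw [ihb, ih (b+2)]
      have e5 : 2*(n+1)+(b+1)+1 = (2*(n+1)+b+1)+1 := by ring
      rw [e5, R_pascal (n+1) (2*(n+1)+b+1)]
      have e6 : 2*n+(b+2)+1 = 2*(n+1)+b+1 := by ring
      rw [e6]


lemma descEval (l : ℕ) : (descPochhammer ℝ l).eval ((l:ℝ) - 1/2)
    = (2*l).factorial / (4^l * l.factorial) := by
  induction l with
  | zero => simp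
  | succ n ih =>
    rw [descPochhammer_succ_left]
    rw [Polynomial.eval_mul, Polynomial.eval_comp, Polynomial.eval_sub, Polynomial.eval_X,
      Polynomial.eval_one]
    push_cast
    rw [show ((n:ℝ)+1) - 1/2 - 1 = (n:ℝ) - 1/2 from by ring, ih]
    rw [show 2*(n+1) = (2*n+1)+1 from by ring, Nat.factorial_succ, Nat.factorial_succ,
      Nat.factorial_succ]
    have h4 : (4:ℝ)^(n+1) = 4 * 4^n := by rw [pow_succ]; ring
    push_cast [h4]
    have hfac : (n.factorial : ℝ) ≠ 0 := by positivity
    have h4n : (4:ℝ)^n ≠ 0 := by positivity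
    field_simp
    ring

lemma key (n b : ℕ) :
    ∑ l ∈ range (n+1), ((n+b+1).choose l : ℝ)
        * ((2*l).factorial / (2^l * l.factorial))
        * ((2*(n-l)+b).factorial / (2^(n-l) * b.factorial * (n-l).factorial))
    = (2*n+b+1).factorial / (2^n * (b+1).factorial * n.factorial) := by
  have hA : (∑ l ∈ range (n+1), (((2*l).choose l : ℝ) * ((2*(n-l)+b).choose (n-l) : ℝ)))
      = ∑ i ∈ range (n+1), ((2*n+b+1).choose i : ℝ) := by
    exact_mod_cast congrArg (Nat.cast : ℕ → ℝ) (E_eq n b)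
  set γ : ℝ := (n+b+1).factorial / (2^n * (b+1).factorial) with hγ
  have hBext : ∑ l ∈ range (n+1), (if l < n then
        γ * (((2*l).choose l : ℝ) * ((2*(n-1-l)+(b+2)).choose (n-1-l) : ℝ)) else 0)
      = γ * ∑ i ∈ range n, ((2*n+b+1).choose i : ℝ) := by
    rcases Nat.eq_zero_or_pos n with h0 | hpos
    · subst h0; simp
    · obtain ⟨n', rfl⟩ : ∃ n', n = n' + 1 := ⟨n - 1, by omega⟩
      rw [Finset.sum_range_succ, if_neg (lt_irrefl _)]
      have h1 : ∀ l ∈ range (n'+1), (if l < n'+1 then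
            γ * (((2*l).choose l : ℝ) * ((2*(n'+1-1-l)+(b+2)).choose (n'+1-1-l) : ℝ)) else 0)
          = γ * (((2*l).choose l : ℝ) * ((2*(n'-l)+(b+2)).choose (n'-l) : ℝ)) := by
        intro l hl
        rw [if_pos (mem_range.mp hl)]
        norm_num
      rw [Finset.sum_congr rfl h1, ← Finset.mul_sum, add_zero]
      congr 1
      have := E_eq n' (b+2)
      have e1 : 2*n'+(b+2)+1 = 2*(n'+1)+b+1 := by ring
      rw [e1] at this
      exact_mod_cast congrArg (Nat.cast : ℕ → ℝ) this
  have hterm : ∀ l ∈ range (n+1),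
      ((n+b+1).choose l : ℝ) * ((2*l).factorial / (2^l * l.factorial))
        * ((2*(n-l)+b).factorial / (2^(n-l) * b.factorial * (n-l).factorial))
      = γ * (((2*l).choose l : ℝ) * ((2*(n-l)+b).choose (n-l) : ℝ))
        - (if l < n then
            γ * (((2*l).choose l : ℝ) * ((2*(n-1-l)+(b+2)).choose (n-1-l) : ℝ)) else 0) := by
    intro l hl
    have hln : l ≤ n := Nat.lt_succ_iff.mp (mem_range.mp hl)
    rcases eq_or_lt_of_le hln with rfl | hlt
    · rw [if_neg (lt_irrefl _), sub_zero, Nat.sub_self]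
      rw [Nat.cast_choose ℝ (show l ≤ l+b+1 by omega),
          Nat.cast_choose ℝ (show l ≤ 2*l by omega)]
      rw [show l+b+1-l = b+1 from by omega, show 2*l-l = l from by omega]
      simp only [Nat.mul_zero, Nat.zero_add, Nat.choose_zero_right, hγ]
      have h1 : (l.factorial : ℝ) ≠ 0 := by positivity
      have h2 : ((b+1).factorial : ℝ) ≠ 0 := by positivity
      have h3 : (b.factorial : ℝ) ≠ 0 := by positivity
      have h4 : (2:ℝ)^l ≠ 0 := by positivity
      push_cast
      field_simp
      ring
    · obtain ⟨m, rfl⟩ : ∃ m, n = l + m + 1 := ⟨n - l - 1, by omega⟩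
      rw [if_pos hlt]
      rw [show l+m+1-l = m+1 from by omega, show l+m+1-1-l = m from by omega]
      rw [Nat.cast_choose ℝ (show l ≤ l+m+1+b+1 by omega),
          Nat.cast_choose ℝ (show l ≤ 2*l by omega),
          Nat.cast_choose ℝ (show m+1 ≤ 2*(m+1)+b by omega),
          Nat.cast_choose ℝ (show m ≤ 2*m+(b+2) by omega)]
      rw [show l+m+1+b+1-l = m+b+2 from by omega, show 2*l-l = l from by omega,
          show 2*(m+1)+b-(m+1) = m+b+1 from by omega,
          show 2*m+(b+2)-m = m+b+2 from by omega,
          show 2*m+(b+2) = 2*(m+1)+b from by omega]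
      rw [hγ]
      rw [show (m+b+2).factorial = (m+b+2)*(m+b+1).factorial from Nat.factorial_succ (m+b+1),
          show (m+1).factorial = (m+1)*m.factorial from Nat.factorial_succ m,
          show (b+1).factorial = (b+1)*b.factorial from Nat.factorial_succ b,
          show (2:ℝ)^(l+m+1) = 2^l*2^m*2 from by ring,
          show (2:ℝ)^(m+1) = 2^m*2 from by ring]
      have h1 : (l.factorial : ℝ) ≠ 0 := by positivity
      have h2 : (m.factorial : ℝ) ≠ 0 := by positivity
      have h3 : (b.factorial : ℝ) ≠ 0 := by positivity
      have h4 : ((m+b+1).factorial : ℝ) ≠ 0 := by positivity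
      have h5 : (2:ℝ)^l ≠ 0 := by positivity
      have h6 : (2:ℝ)^m ≠ 0 := by positivity
      push_cast
      field_simp
      ring
  rw [Finset.sum_congr rfl hterm, Finset.sum_sub_distrib, ← Finset.mul_sum, hA, hBext,
      ← mul_sub, Finset.sum_range_succ]
  rw [add_sub_cancel_left]
  rw [Nat.cast_choose ℝ (show n ≤ 2*n+b+1 by omega),
      show 2*n+b+1-n = n+b+1 from by omega, hγ]
  have h1 : (n.factorial : ℝ) ≠ 0 := by positivity
  have h2 : ((n+b+1).factorial : ℝ) ≠ 0 := by positivity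
  have h3 : ((b+1).factorial : ℝ) ≠ 0 := by positivity
  have h4 : (2:ℝ)^n ≠ 0 := by positivity
  field_simp




lemma sum_triangle (k : ℕ) (f : ℕ → ℕ → ℝ) :
    ∑ l ∈ range k, ∑ t ∈ range (k - l), f l t
      = ∑ t ∈ range k, ∑ l ∈ range (k - t), f l t := by
  have h1 : ∀ l ∈ range k, ∑ t ∈ range (k - l), f l t
      = ∑ t ∈ range k, if l + t < k then f l t else 0 := by
    intro l _
    rw [← Finset.sum_filter]
    apply Finset.sum_congr _ (fun t _ => rfl)
    ext t; simp only [mem_range, mem_filter]; omega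
  rw [Finset.sum_congr rfl h1, Finset.sum_comm]
  refine Finset.sum_congr rfl fun t _ => ?_
  rw [← Finset.sum_filter]
  apply Finset.sum_congr _ (fun l _ => rfl)
  ext l; simp only [mem_range, mem_filter]; omega

lemma key' (k t : ℕ) (ht : t < k) :
    ∑ l ∈ range (k - t), (k.choose l : ℝ) * ((2*l).factorial / (2^l * l.factorial)) * cf (k - l) (t+1)
      = cf (k+1) (t+2) := by
  obtain ⟨n, rfl⟩ : ∃ n, k = n + t + 1 := ⟨k - t - 1, by omega⟩
  rw [show n + t + 1 - t = n + 1 from by omega]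
  have hterm : ∀ l ∈ range (n+1),
      ((n+t+1).choose l : ℝ) * ((2*l).factorial / (2^l * l.factorial)) * cf (n+t+1-l) (t+1)
      = ((n+t+1).choose l : ℝ) * ((2*l).factorial / (2^l * l.factorial))
          * ((2*(n-l)+t).factorial / (2^(n-l) * t.factorial * (n-l).factorial)) := by
    intro l hl
    have hln : l ≤ n := Nat.lt_succ_iff.mp (mem_range.mp hl)
    unfold cf
    rw [show 2*(n+t+1-l) - (t+1) - 1 = 2*(n-l)+t from by omega,
        show (n+t+1-l) - (t+1) = n-l from by omega,
        show t+1-1 = t from by omega]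
  rw [Finset.sum_congr rfl hterm]
  have := key n t
  rw [show n+t+1 = n+(t+1) from by omega] at this ⊢
  rw [this]
  unfold cf
  rw [show 2*(n+(t+1)+1) - (t+2) - 1 = 2*n+t+1 from by omega,
      show (n+(t+1)+1) - (t+2) = n from by omega,
      show t+2-1 = t+1 from by omega]

lemma cf_one (k : ℕ) :
    cf (k+1) 1 = (k.choose k : ℝ) * ((2*k).factorial / (2^k * k.factorial)) := by
  unfold cf
  rw [Nat.choose_self, show 2*(k+1)-1-1 = 2*k from by omega, show k+1-1 = k from by omega]
  norm_num

lemma core (k : ℕ) (x : ℝ) :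
    ∑ j ∈ Icc 1 (k+1), cf (k+1) j * x^j
    = x * (∑ l ∈ range k, (k.choose l : ℝ) * ((2*l).factorial / (2^l * l.factorial))
            * ∑ j ∈ Icc 1 (k-l), cf (k-l) j * x^j
        + (k.choose k : ℝ) * ((2*k).factorial / (2^k * k.factorial))) := by
  have hIcc : ∀ (N : ℕ) (g : ℕ → ℝ), ∑ j ∈ Icc 1 N, g j = ∑ t ∈ range N, g (t+1) := by
    intro N g
    rw [← Finset.Ico_add_one_right_eq_Icc, Finset.sum_Ico_eq_sum_range]
    exact Finset.sum_congr rfl fun t _ => by rw [Nat.add_comm]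
  rw [hIcc (k+1) (fun j => cf (k+1) j * x^j),
      Finset.sum_range_succ' (fun t => cf (k+1) (t+1) * x^(t+1)) k]
  have hR : ∀ l ∈ range k, (k.choose l : ℝ) * ((2*l).factorial / (2^l * l.factorial))
        * ∑ j ∈ Icc 1 (k-l), cf (k-l) j * x^j
      = ∑ t ∈ range (k-l),
          ((k.choose l : ℝ) * ((2*l).factorial / (2^l * l.factorial)) * cf (k-l) (t+1)) * x^(t+1) := by
    intro l _
    rw [hIcc (k-l) (fun j => cf (k-l) j * x^j), Finset.mul_sum]
    exact Finset.sum_congr rfl fun t _ => by ring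
  rw [Finset.sum_congr rfl hR,
      sum_triangle k (fun l t =>
        ((k.choose l : ℝ) * ((2*l).factorial / (2^l * l.factorial)) * cf (k-l) (t+1)) * x^(t+1))]
  have hT : ∀ t ∈ range k,
      ∑ l ∈ range (k-t),
          ((k.choose l : ℝ) * ((2*l).factorial / (2^l * l.factorial)) * cf (k-l) (t+1)) * x^(t+1)
      = cf (k+1) (t+2) * x^(t+1) := by
    intro t htk
    rw [← Finset.sum_mul, key' k t (mem_range.mp htk)]
  rw [Finset.sum_congr rfl hT, mul_add, Finset.mul_sum, cf_one]
  congr 1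
  · exact Finset.sum_congr rfl fun t _ => by ring
  · ring






lemma pB_pos (n : ℕ) (x : ℝ) (h : n ≠ 0) : pB n x = ∑ j ∈ Icc 1 n, cf n j * x^j := by
  rw [pB, if_neg h]
  rfl

lemma two_pow_desc (l : ℕ) : (2:ℝ)^l * (descPochhammer ℝ l).eval ((l:ℝ) - 1/2)
    = (2*l).factorial / (2^l * l.factorial) := by
  rw [descEval, show (4:ℝ)^l = 2^l * 2^l from by rw [← mul_pow]; norm_num]
  have h1 : (2:ℝ)^l ≠ 0 := by positivity
  have h2 : (l.factorial : ℝ) ≠ 0 := by positivity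
  field_simp

theorem reverse_bessel_step_identity (k : ℕ) (x : ℝ) :
    pB (k + 1) x =
      x * ∑ l ∈ Finset.range (k + 1),
        (k.choose l : ℝ) * 2 ^ l * (descPochhammer ℝ l).eval ((l : ℝ) - 1 / 2)
          * pB (k - l) x := by
  rw [Finset.sum_range_succ, Nat.sub_self]
  rw [show pB 0 x = 1 from by rw [pB, if_pos rfl]]
  have h2 : ∀ l ∈ range k,
      (k.choose l : ℝ) * 2 ^ l * (descPochhammer ℝ l).eval ((l : ℝ) - 1 / 2) * pB (k - l) x
      = (k.choose l : ℝ) * ((2*l).factorial / (2^l * l.factorial))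
          * ∑ j ∈ Icc 1 (k-l), cf (k-l) j * x^j := by
    intro l hl
    have hkl : k - l ≠ 0 := by have := mem_range.mp hl; omega
    rw [pB_pos (k-l) x hkl, mul_assoc (k.choose l : ℝ) ((2:ℝ)^l) _, two_pow_desc l]
  rw [Finset.sum_congr rfl h2, mul_one,
      mul_assoc (k.choose k : ℝ) ((2:ℝ)^k) _, two_pow_desc k]
  rw [pB_pos (k+1) x (Nat.succ_ne_zero k)]
  exact core k x
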